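/- (Strong multiplication on the toric surface.) Let a, b be integers with 0 ≤ b ≤ a ≤ q−2, q ≥ 3 and 2a ≤ q−2, and let U = {(i,j) ∈ ℤ² : 0 ≤ j ≤ q−2, 0 ≤ i, and (q−2)·i ≤ a(q−2) + (b−a)·j}. Let t be a natural number with t ≤ min{b−1, (q−2−2a)−1}. Fix P_0 ∈ (𝔽_q^*)², let A ⊆ (𝔽_q^*)² ∖ {P_0} with |A| ≤ t, and set B = (𝔽_q^*)² ∖ ({P_0} ∪ A). Then: (1) for every f ∈ 𝔽_q<U> and every s ∈ 𝔽_q there exists g ∈ 𝔽_q<U> with g(P) = f(P) for all P ∈ A and g(P_0) = s; and (2) for all f, g, f', g' ∈ 𝔽_q<U> with f(P)·g(P) = f'(P)·g'(P) for every P ∈ B, one has f(P_0)·g(P_0) = f'(P_0)·g'(P_0). That is, the scheme M(U) has t-strong multiplication with respect to the threshold adversary structure A_{t,n}, n = (q−1)² − 1. -/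

import Mathlib

open scoped BigOperators

/-- Evaluation of a Laurent polynomial (given by its finitely supported coefficient
function on exponent vectors in `ℤ²`) at a point of the torus `(Kˣ)²`. -/
noncomputable def laurentEval {K : Type} [Field K] {r : ℕ}
    (f : (Fin r → ℤ) →₀ K) (P : Fin r → Kˣ) : K :=
  ∑ u ∈ f.support, f u * ∏ i, ((P i ^ u i : Kˣ) : K)

namespace Stmt15Aux

variable {K : Type} [Field K]

noncomputable def E {r : ℕ} (P : Fin r → Kˣ) : AddMonoidAlgebra K (Fin r → ℤ) →ₐ[K] K :=
  AddMonoidAlgebra.lift K K (Fin r → ℤ) ((Units.coeHom K).comp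
    { toFun := fun u => ∏ i, P i ^ (Multiplicative.toAdd u) i
      map_one' := by simp
      map_mul' := fun u v => by simp [zpow_add, Finset.prod_mul_distrib] })

theorem E_single {r : ℕ} (P : Fin r → Kˣ) (u : Fin r → ℤ) (c : K) :
    E P (AddMonoidAlgebra.ofCoeff (Finsupp.single u c)) = c * ∏ i, ((P i ^ u i : Kˣ) : K) := by
  rw [E, AddMonoidAlgebra.ofCoeff_single, AddMonoidAlgebra.lift_single]; simp [smul_eq_mul]

theorem laurentEval_eq {r : ℕ} (f : (Fin r → ℤ) →₀ K) (P : Fin r → Kˣ) :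
    laurentEval f P = E P (AddMonoidAlgebra.ofCoeff f) := by
  rw [E, AddMonoidAlgebra.lift_apply, laurentEval, Finsupp.sum]
  refine Finset.sum_congr rfl fun u _ => ?_
  simp [smul_eq_mul]

theorem E_apply {r : ℕ} (f : AddMonoidAlgebra K (Fin r → ℤ)) (P : Fin r → Kˣ) :
    E P f = ∑ u ∈ f.coeff.support, f.coeff u * ∏ i, ((P i ^ u i : Kˣ) : K) :=
  (laurentEval_eq f.coeff P).symm

/-! ### The indicator function of a `y`-coordinate -/

noncomputable def delta (q : ℕ) (y₀ : Kˣ) : AddMonoidAlgebra K (Fin 2 → ℤ) :=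
  AddMonoidAlgebra.ofCoeff (-(∑ j ∈ Finset.range (q-1), Finsupp.single (![0,(j:ℤ)] : Fin 2 → ℤ) ((y₀⁻¹ ^ j : Kˣ) : K)))

theorem delta_support {q : ℕ} (y₀ : Kˣ) :
    ∀ u ∈ (delta q y₀ : AddMonoidAlgebra K (Fin 2 → ℤ)).coeff.support,
      u 0 = 0 ∧ 0 ≤ u 1 ∧ u 1 ≤ (q : ℤ) - 2 := by
  intro u hu
  rw [delta, AddMonoidAlgebra.coeff_ofCoeff, Finsupp.support_neg] at hu
  obtain ⟨j, hj, hju⟩ := Finsupp.mem_support_finsetSum u hu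
  have := Finsupp.support_single_subset hju
  simp only [Finset.mem_singleton] at this
  subst this
  have hj : j < q - 1 := Finset.mem_range.mp hj
  refine ⟨rfl, ?_, ?_⟩ <;> simp only [Matrix.cons_val_one, Matrix.head_cons, Matrix.cons_val_zero] <;> omega

variable [Fintype K]
open scoped Classical

theorem delta_eval {q : ℕ} (hq : Fintype.card K = q) (hq3 : 3 ≤ q) (y₀ : Kˣ)
    (P : Fin 2 → Kˣ) :
    E P (delta q y₀) = if P 1 = y₀ then 1 else 0 := by
  have hcardu : Fintype.card Kˣ = q - 1 := by rw [Fintype.card_units, hq]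
  rw [delta, AddMonoidAlgebra.ofCoeff_neg, AddMonoidAlgebra.ofCoeff_sum, map_neg, map_sum]
  have key : ∀ j ∈ Finset.range (q-1),
      E P (AddMonoidAlgebra.ofCoeff (Finsupp.single (![0,(j:ℤ)] : Fin 2 → ℤ) ((y₀⁻¹ ^ j : Kˣ) : K)))
        = (((y₀⁻¹ * P 1 : Kˣ) ^ j : Kˣ) : K) := by
    intro j _
    rw [E_single, Fin.prod_univ_two]
    simp [mul_pow, mul_comm]
  rw [Finset.sum_congr rfl key]
  by_cases h : P 1 = y₀
  · subst h
    simp only [inv_mul_cancel, one_pow, Units.val_one, Finset.sum_const,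
      Finset.card_range, nsmul_eq_mul, mul_one, if_pos rfl]
    have hm1 : ((q - 1 : ℕ) : K) = -1 := by
      have h0 : ((q : ℕ) : K) = 0 := by rw [← hq]; exact FiniteField.cast_card_eq_zero K
      have : ((q - 1 : ℕ) : K) = ((q:ℕ):K) - 1 := by
        rw [Nat.cast_sub (by omega)]; simp
      rw [this, h0]; ring
    rw [hm1]; ring
    simp
  · rw [if_neg h]
    set g : Kˣ := y₀⁻¹ * P 1 with hg
    have hg1 : (g : K) ≠ 1 := by
      intro hc
      apply h
      have hu1 : g = 1 := Units.ext (by simpa using hc)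
      rw [hg] at hu1
      exact (eq_of_inv_mul_eq_one hu1).symm
    have hpow : (g : K) ^ (q - 1) = 1 := by
      have : g ^ Fintype.card Kˣ = 1 := pow_card_eq_one
      rw [hcardu] at this
      simpa using congrArg (Units.val) this
    have hgeom : ∑ j ∈ Finset.range (q-1), ((g:K)) ^ j = ((g:K) ^ (q-1) - 1)/((g:K) - 1) :=
      geom_sum_eq hg1 _
    push_cast
    rw [hgeom, hpow]
    simp

/-! ### Products of linear factors in `x` -/

noncomputable def lin (x : Kˣ) : AddMonoidAlgebra K (Fin 2 → ℤ) :=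
  AddMonoidAlgebra.ofCoeff (Finsupp.single (![1,0] : Fin 2 → ℤ) 1 - Finsupp.single 0 ((x : K)))

noncomputable def xprod (S : Finset Kˣ) : AddMonoidAlgebra K (Fin 2 → ℤ) :=
  ∏ x ∈ S, lin x

theorem E_lin (P : Fin 2 → Kˣ) (x : Kˣ) : E P (lin x) = (P 0 : K) - (x : K) := by
  rw [lin, AddMonoidAlgebra.ofCoeff_sub, map_sub, E_single, E_single, Fin.prod_univ_two, Fin.prod_univ_two]
  simp

theorem E_xprod (P : Fin 2 → Kˣ) (S : Finset Kˣ) :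
    E P (xprod S) = ∏ x ∈ S, ((P 0 : K) - (x : K)) := by
  rw [xprod, map_prod]
  exact Finset.prod_congr rfl fun x _ => E_lin P x

theorem xprod_support (S : Finset Kˣ) :
    ∀ u ∈ (xprod S : AddMonoidAlgebra K (Fin 2 → ℤ)).coeff.support,
      u 1 = 0 ∧ 0 ≤ u 0 ∧ u 0 ≤ (S.card : ℤ) := by
  induction S using Finset.induction_on with
  | empty =>
      intro u hu
      rw [xprod, Finset.prod_empty] at hu
      have : u = 0 := by
        have := Finsupp.support_single_subset (by exact_mod_cast hu :
          u ∈ (Finsupp.single (0 : Fin 2 → ℤ) (1:K)).support)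
        simpa using this
      subst this; simp
  | @insert x S' hx ih =>
      intro u hu
      rw [xprod, Finset.prod_insert hx, ← xprod] at hu
      have hu2 := AddMonoidAlgebra.support_coeff_mul_subset (lin x) (xprod S') hu
      rw [Finset.mem_add] at hu2
      obtain ⟨v, hv, w, hw, rfl⟩ := hu2
      have hvsub : v ∈ ({(![1,0] : Fin 2 → ℤ), 0} : Finset (Fin 2 → ℤ)) := by
        have h2 := Finsupp.support_sub (f := Finsupp.single (![1,0] : Fin 2 → ℤ) (1:K))
          (g := Finsupp.single 0 ((x : K))) (by exact_mod_cast hv)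
        rcases Finset.mem_union.mp h2 with h | h
        · exact Finset.mem_insert.mpr (Or.inl (by simpa using Finsupp.support_single_subset h))
        · exact Finset.mem_insert.mpr (Or.inr (by simpa using Finsupp.support_single_subset h))
      obtain ⟨hw1, hw0, hwc⟩ := ih w hw
      rw [Finset.card_insert_of_notMem hx]
      rcases Finset.mem_insert.mp hvsub with rfl | h
      · refine ⟨by simp [hw1], by simp; omega, ?_⟩
        simp only [Pi.add_apply, Matrix.cons_val_zero]
        push_cast; omega
      · simp only [Finset.mem_singleton] at h; subst h
        refine ⟨by simp [hw1], by simpa using hw0, ?_⟩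
        simp only [Pi.add_apply, Pi.zero_apply, zero_add]
        push_cast; omega

/-! ### Vanishing lemma: low `x`-degree plus few exceptional points forces vanishing -/

theorem vanish_of_lowdeg {q : ℕ} (hq : Fintype.card K = q) (hq3 : 3 ≤ q)
    (d : ℕ) (h : AddMonoidAlgebra K (Fin 2 → ℤ))
    (hsup : ∀ u ∈ h.coeff.support, 0 ≤ u 0 ∧ u 0 ≤ (d : ℤ))
    (Bad : Finset (Fin 2 → Kˣ)) (hcard : d + Bad.card < q - 1)
    (hvan : ∀ P : Fin 2 → Kˣ, P ∉ Bad → E P h = 0) :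
    ∀ P : Fin 2 → Kˣ, E P h = 0 := by
  intro P
  set y₀ : Kˣ := P 1 with hy₀
  set p : Polynomial K :=
    ∑ u ∈ h.coeff.support, Polynomial.C (h.coeff u * ((y₀ ^ u 1 : Kˣ) : K)) * Polynomial.X ^ (u 0).toNat
    with hp
  have heval : ∀ x : Kˣ, p.eval (x : K) = E (![x, y₀]) h := by
    intro x
    rw [hp, Polynomial.eval_finset_sum, E_apply]
    refine Finset.sum_congr rfl fun u hu => ?_
    rw [Fin.prod_univ_two]
    simp only [Polynomial.eval_mul, Polynomial.eval_C, Polynomial.eval_pow,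
      Polynomial.eval_X, Matrix.cons_val_zero, Matrix.cons_val_one, Matrix.head_cons]
    have h0 : ((x ^ u 0 : Kˣ) : K) = (x : K) ^ (u 0).toNat := by
      rw [← Int.toNat_of_nonneg (hsup u hu).1, zpow_natCast]
      push_cast; rw [Int.toNat_of_nonneg (hsup u hu).1]
    rw [h0]; ring
  have hdeg : p.natDegree ≤ d := by
    rw [hp]
    refine Polynomial.natDegree_sum_le_of_forall_le _ _ fun u hu => ?_
    refine le_trans (Polynomial.natDegree_C_mul_X_pow_le _ _) ?_
    have := (hsup u hu).2
    omega
  have hpz : p = 0 := by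
    refine Polynomial.eq_zero_of_natDegree_lt_card_of_eval_eq_zero p
      (f := fun x : {x : Kˣ // (![x, y₀] : Fin 2 → Kˣ) ∉ Bad} => ((x : Kˣ) : K))
      (fun x y hxy => Subtype.ext (Units.ext hxy)) ?_ ?_
    · intro x
      rw [heval]
      exact hvan _ x.2
    · have hinj : Set.InjOn (fun x : Kˣ => (![x, y₀] : Fin 2 → Kˣ))
          ↑(Finset.univ.filter (fun x : Kˣ => (![x, y₀] : Fin 2 → Kˣ) ∈ Bad)) := by
        intro x _ y _ hxy
        simpa using congrFun hxy 0
      have h1 : (Finset.univ.filter (fun x : Kˣ => (![x, y₀] : Fin 2 → Kˣ) ∈ Bad)).card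
          ≤ Bad.card := by
        refine Finset.card_le_card_of_injOn _ ?_ hinj
        intro x hx
        simpa using (Finset.mem_filter.mp hx).2
      have h2 := Finset.card_filter_add_card_filter_not
        (s := (Finset.univ : Finset Kˣ))
        (p := fun x : Kˣ => (![x, y₀] : Fin 2 → Kˣ) ∈ Bad)
      have hcKu : Fintype.card Kˣ = q - 1 := by rw [Fintype.card_units, hq]
      have h3 : Fintype.card {x : Kˣ // (![x, y₀] : Fin 2 → Kˣ) ∉ Bad}
          = (Finset.univ.filter (fun x : Kˣ => ¬((![x, y₀] : Fin 2 → Kˣ) ∈ Bad))).card :=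
        Fintype.card_subtype _
      rw [h3]
      have h4 : (Finset.univ : Finset Kˣ).card = q - 1 := by
        rw [Finset.card_univ, hcKu]
      omega
  have hPP : (![P 0, P 1] : Fin 2 → Kˣ) = P := by
    funext i; fin_cases i <;> simp
  have := heval (P 0)
  rw [hpz] at this
  simp only [Polynomial.eval_zero] at this
  rw [← hy₀] at hPP
  rw [hPP] at this
  exact this.symm

end Stmt15Aux

open Stmt15Aux in
/-- strong multiplication on the toric surface: for `U` the lattice
points of the polytope with vertices `(0,0), (a,0), (b,q−2), (0,q−2)`
(`0 ≤ b ≤ a ≤ q−2`, `2a ≤ q−2`) and `t ≤ min{b−1, (q−2−2a)−1}`, the scheme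
`M(U)` has `t`-strong multiplication: (1) any `t` shares reveal nothing about the
secret, and (2) after removing any `t` shares, the products of the remaining
shares determine the product of the secrets. -/
theorem stmt15 {K : Type} [Field K] [Fintype K]
    (q : ℕ) (hq : Fintype.card K = q) (hq3 : 3 ≤ q)
    (a b : ℤ) (hb : 0 ≤ b) (hba : b ≤ a) (ha : a ≤ (q : ℤ) - 2)
    (h2a : 2 * a ≤ (q : ℤ) - 2)
    (U : Set (Fin 2 → ℤ))
    (hU : U = {u : Fin 2 → ℤ | 0 ≤ u 1 ∧ u 1 ≤ (q : ℤ) - 2 ∧ 0 ≤ u 0 ∧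
        ((q : ℤ) - 2) * u 0 ≤ a * ((q : ℤ) - 2) + (b - a) * u 1})
    (t : ℕ) (ht : (t : ℤ) ≤ min (b - 1) (((q : ℤ) - 2 - 2 * a) - 1))
    (P₀ : Fin 2 → Kˣ) (A : Finset (Fin 2 → Kˣ)) (hP₀ : P₀ ∉ A)
    (hA : A.card ≤ t) :
    (∀ f : (Fin 2 → ℤ) →₀ K, ↑f.support ⊆ U → ∀ s : K,
      ∃ g : (Fin 2 → ℤ) →₀ K, ↑g.support ⊆ U ∧
        (∀ P ∈ A, laurentEval g P = laurentEval f P) ∧ laurentEval g P₀ = s) ∧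
    (∀ f g f' g' : (Fin 2 → ℤ) →₀ K,
      ↑f.support ⊆ U → ↑g.support ⊆ U → ↑f'.support ⊆ U → ↑g'.support ⊆ U →
      (∀ P : Fin 2 → Kˣ, P ≠ P₀ → P ∉ A →
        laurentEval f P * laurentEval g P = laurentEval f' P * laurentEval g' P) →
      laurentEval f P₀ * laurentEval g P₀ =
        laurentEval f' P₀ * laurentEval g' P₀) := by
  classical
  have htb : (t : ℤ) ≤ b - 1 := le_trans ht (min_le_left _ _)
  have hta : (t : ℤ) ≤ ((q : ℤ) - 2 - 2 * a) - 1 := le_trans ht (min_le_right _ _)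
  have hq2 : (1:ℤ) ≤ (q:ℤ) - 2 := by
    have : (3:ℤ) ≤ (q:ℤ) := by exact_mod_cast hq3
    linarith
  constructor
  · -- Part 1: t-privacy / interpolation
    intro f hf s
    set T : Finset (Fin 2 → Kˣ) := insert P₀ A with hT
    have hTcard : T.card ≤ t + 1 := le_trans (Finset.card_insert_le _ _) (by omega)
    set S : (Fin 2 → Kˣ) → Finset Kˣ :=
      fun Q => ((T.erase Q).image (fun P => P 0)).erase (Q 0) with hSdef
    set hh : (Fin 2 → Kˣ) → AddMonoidAlgebra K (Fin 2 → ℤ) :=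
      fun Q => xprod (S Q) * delta q (Q 1) with hhdef
    have hScard : ∀ Q ∈ T, ((S Q).card : ℤ) ≤ (t : ℤ) := by
      intro Q hQ
      have h1 : (S Q).card ≤ (T.erase Q).card :=
        le_trans (Finset.card_erase_le) (Finset.card_image_le)
      have h2 : (T.erase Q).card = T.card - 1 := Finset.card_erase_of_mem hQ
      have h3 : (S Q).card ≤ t := by omega
      exact_mod_cast h3
    have hEval : ∀ (Q : Fin 2 → Kˣ) (P : Fin 2 → Kˣ),
        E P (hh Q) = (∏ x ∈ S Q, ((P 0 : K) - (x : K))) * (if P 1 = Q 1 then 1 else 0) := by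
      intro Q P
      rw [hhdef]
      simp only
      rw [map_mul, E_xprod, delta_eval hq hq3]
    have hEQQ : ∀ Q : Fin 2 → Kˣ, E Q (hh Q) ≠ 0 := by
      intro Q
      rw [hEval, if_pos rfl, mul_one]
      refine Finset.prod_ne_zero_iff.mpr fun x hx => ?_
      have hxne : x ≠ Q 0 := Finset.ne_of_mem_erase hx
      intro hc
      exact hxne (Units.ext (sub_eq_zero.mp hc).symm)
    have hERQ : ∀ Q ∈ T, ∀ R ∈ T, R ≠ Q → E R (hh Q) = 0 := by
      intro Q hQ R hR hne
      rw [hEval]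
      by_cases hy : R 1 = Q 1
      · rw [if_pos hy, mul_one]
        have hx0 : R 0 ≠ Q 0 := by
          intro hc
          apply hne
          funext i
          fin_cases i
          · exact hc
          · exact hy
        refine Finset.prod_eq_zero (i := R 0) ?_ (by simp)
        exact Finset.mem_erase.mpr
          ⟨hx0, Finset.mem_image.mpr ⟨R, Finset.mem_erase.mpr ⟨hne, hR⟩, rfl⟩⟩
      · rw [if_neg hy, mul_zero]
    have hhsupp : ∀ Q ∈ T, ∀ u ∈ (hh Q).coeff.support, u ∈ U := by
      intro Q hQ u hu
      rw [hhdef] at hu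
      simp only at hu
      obtain ⟨v, hv, w, hw, rfl⟩ :=
        Finset.mem_add.mp (AddMonoidAlgebra.support_coeff_mul_subset (xprod (S Q)) (delta q (Q 1)) hu)
      obtain ⟨hv1, hv0, hvc⟩ := xprod_support (S Q) v hv
      obtain ⟨hw0, hw1, hwq⟩ := delta_support (Q 1) w hw
      have hSc := hScard Q hQ
      rw [hU]
      refine ⟨?_, ?_, ?_, ?_⟩ <;> simp only [Set.mem_setOf_eq, Pi.add_apply]
      · omega
      · omega
      · omega
      · have hu0 : v 0 + w 0 ≤ b := by omega
        have hu1a : v 1 + w 1 ≤ (q:ℤ) - 2 := by omega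
        have hu1b : 0 ≤ v 1 + w 1 := by omega
        nlinarith [mul_nonneg (sub_nonneg.2 hba) (sub_nonneg.2 hu1a),
          mul_le_mul_of_nonneg_left hu0 (by linarith : (0:ℤ) ≤ (q:ℤ) - 2)]
    set tgt : (Fin 2 → Kˣ) → K := fun Q => if Q = P₀ then s else laurentEval f Q with htgt
    set gg : AddMonoidAlgebra K (Fin 2 → ℤ) :=
      ∑ Q ∈ T, (tgt Q / E Q (hh Q)) • hh Q with hgg
    have hgval : ∀ R ∈ T, E R gg = tgt R := by
      intro R hR
      rw [hgg, map_sum, Finset.sum_eq_single R]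
      · rw [map_smul, smul_eq_mul, div_mul_cancel₀ _ (hEQQ R)]
      · intro Q hQ hne
        rw [map_smul, smul_eq_mul, hERQ Q hQ R hR (Ne.symm hne), mul_zero]
      · intro hc
        exact absurd hR hc
    refine ⟨gg.coeff, ?_, ?_, ?_⟩
    · intro u hu
      obtain ⟨Q, hQ, hu2⟩ := Finsupp.mem_support_finsetSum u
        (by rw [hgg, AddMonoidAlgebra.coeff_sum] at hu; exact_mod_cast hu)
      exact hhsupp Q hQ u (Finsupp.support_smul (b := tgt Q / E Q (hh Q)) (g := (hh Q).coeff)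
        (by rw [← AddMonoidAlgebra.coeff_smul]; exact hu2))
    · intro P hP
      rw [laurentEval_eq, AddMonoidAlgebra.ofCoeff_coeff, hgval P (Finset.mem_insert_of_mem hP), htgt]
      simp only
      rw [if_neg (by rintro rfl; exact hP₀ hP)]
    · rw [laurentEval_eq, AddMonoidAlgebra.ofCoeff_coeff, hgval P₀ (Finset.mem_insert_self _ _), htgt]
      simp
  · -- Part 2: strong multiplication
    intro f g f' g' hf hg hf' hg' hprod
    let toMA : ((Fin 2 → ℤ) →₀ K) → AddMonoidAlgebra K (Fin 2 → ℤ) :=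
        AddMonoidAlgebra.ofCoeff
    set D : AddMonoidAlgebra K (Fin 2 → ℤ) :=
      toMA f * toMA g - toMA f' * toMA g' with hD
    have h2a0 : (((2*a).toNat : ℤ)) = 2*a := Int.toNat_of_nonneg (by linarith)
    have key : ∀ (p r : AddMonoidAlgebra K (Fin 2 → ℤ)),
        ↑(p.coeff.support) ⊆ U → ↑(r.coeff.support) ⊆ U →
        ∀ u ∈ (p * r).coeff.support, 0 ≤ u 0 ∧ u 0 ≤ 2*a := by
      intro p r hp hr u hu
      obtain ⟨v, hv, w, hw, rfl⟩ := Finset.mem_add.mp (AddMonoidAlgebra.support_coeff_mul_subset p r hu)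
      have hvU := hp hv
      have hwU := hr hw
      rw [hU] at hvU hwU
      obtain ⟨hv1, hv2, hv3, hv4⟩ := hvU
      obtain ⟨hw1, hw2, hw3, hw4⟩ := hwU
      have h0 : (0:ℤ) ≤ v 0 + w 0 := by linarith
      refine ⟨h0, ?_⟩
      have hb1 : (b-a) * v 1 ≤ 0 := mul_nonpos_of_nonpos_of_nonneg (by linarith) hv1
      have hb2 : (b-a) * w 1 ≤ 0 := mul_nonpos_of_nonpos_of_nonneg (by linarith) hw1
      have hsum : ((q:ℤ)-2) * (v 0 + w 0) ≤ ((q:ℤ)-2) * (2*a) := by nlinarith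
      exact le_of_mul_le_mul_left hsum (by linarith)
    have hDsup : ∀ u ∈ D.coeff.support, 0 ≤ u 0 ∧ u 0 ≤ (((2*a).toNat : ℕ) : ℤ) := by
      intro u hu
      rw [h2a0]
      rw [hD, AddMonoidAlgebra.coeff_sub] at hu
      rcases Finset.mem_union.mp (Finsupp.support_sub hu) with h | h
      · exact key (toMA f) (toMA g) hf hg u h
      · exact key (toMA f') (toMA g') hf' hg' u h
    have hvan : ∀ P : Fin 2 → Kˣ, P ∉ insert P₀ A → E P D = 0 := by
      intro P hP
      rw [hD, map_sub, map_mul, map_mul, sub_eq_zero]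
      have h1 : P ≠ P₀ := fun hc => hP (by rw [hc]; exact Finset.mem_insert_self _ _)
      have h2 : P ∉ A := fun hc => hP (Finset.mem_insert_of_mem hc)
      have := hprod P h1 h2
      rwa [laurentEval_eq, laurentEval_eq, laurentEval_eq, laurentEval_eq] at this
    have hcard : (2*a).toNat + (insert P₀ A).card < q - 1 := by
      have hc1 := Finset.card_insert_le P₀ A
      have hq3' : (3:ℤ) ≤ (q:ℤ) := by exact_mod_cast hq3
      omega
    have hz := vanish_of_lowdeg hq hq3 (2*a).toNat D hDsup (insert P₀ A) hcard hvan P₀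
    rw [hD, map_sub, map_mul, map_mul, sub_eq_zero] at hz
    rw [laurentEval_eq, laurentEval_eq, laurentEval_eq, laurentEval_eq]
    exact hz
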